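/- For any seed digit d ∈ {1,2,4,6}, every term T_n of the look-and-say-again sequence with n ≥ 1 satisfies: every run of T_n has base digit in {1,2,4,6} and run length in {2,4,6}. -/

import Mathlib

/-- Run-length encoding of a digit string (a list of digits). -/
def rle : List ℕ → List (ℕ × ℕ)
  | [] => []
  | a :: t =>
    match rle t with
    | [] => [(a, 1)]
    | (b, n) :: r => if a = b then (a, n + 1) :: r else (a, 1) :: (b, n) :: r

/-- `P` is a run-length representation of the digit string `S`:
multiplicities are positive, adjacent base digits are distinct, and `S` is
the concatenation of the runs. -/
def IsRLE (S : List ℕ) (P : List (ℕ × ℕ)) : Prop :=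
  (∀ p ∈ P, 1 ≤ p.2) ∧ List.Chain' (fun p q => p.1 ≠ q.1) P ∧
    S = (P.map fun p => List.replicate p.2 p.1).flatten

/-- The look-and-say-again step: each run `a^n` is read off as `n n a a`. -/
def lsa (T : List ℕ) : List ℕ := (rle T).flatMap fun p => [p.2, p.2, p.1, p.1]

/-- Property `P`: every run has base digit in `{1,2,4,6}` and length in `{2,4,6}`. -/
def propP (T : List ℕ) : Prop :=
  ∀ p ∈ rle T, p.1 ∈ ({1, 2, 4, 6} : Set ℕ) ∧ p.2 ∈ ({2, 4, 6} : Set ℕ)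

lemma rle_cons_eq (x y k : ℕ) (t : List ℕ) (r : List (ℕ × ℕ)) (h : rle t = (y, k) :: r) :
    rle (x :: t) = if x = y then (x, k + 1) :: r else (x, 1) :: (y, k) :: r := by
  simp only [rle, h]

lemma rle_cons_ne (a : ℕ) (t : List ℕ) : rle (a :: t) ≠ [] := by
  rcases h : rle t with _ | ⟨⟨b, n⟩, r⟩
  · simp [rle, h]
  · rw [rle_cons_eq a b n t r h]
    split <;> simp

lemma rle_chain' : ∀ l : List ℕ, List.Chain' (fun p q : ℕ × ℕ => p.1 ≠ q.1) (rle l)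
  | [] => by simp [rle, List.Chain']
  | a :: t => by
    have ih := rle_chain' t
    rcases h : rle t with _ | ⟨⟨b, n⟩, r⟩
    · simp [rle, h, List.Chain']
    · rw [h] at ih
      rw [rle_cons_eq a b n t r h]
      by_cases hab : a = b
      · rw [if_pos hab]; subst hab
        cases r with
        | nil => simp [List.Chain']
        | cons c r' =>
          rw [List.Chain', List.isChain_cons_cons] at ih ⊢
          exact ih
      · rw [if_neg hab]
        exact List.isChain_cons_cons.mpr ⟨hab, ih⟩

lemma key : ∀ (L : List (ℕ × ℕ)) (a n : ℕ),
    List.Chain' (fun p q : ℕ × ℕ => p.1 ≠ q.1) ((a, n) :: L) →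
    (∀ p ∈ (a, n) :: L, p.1 ∈ ({1, 2, 4, 6} : Set ℕ) ∧ p.2 ∈ ({1, 2, 4, 6} : Set ℕ)) →
    ∃ q r, rle (((a, n) :: L).flatMap fun p => [p.2, p.2, p.1, p.1]) = (n, q) :: r ∧
      (n = a ∨ q = 2) ∧
      ∀ p ∈ (n, q) :: r, p.1 ∈ ({1, 2, 4, 6} : Set ℕ) ∧ p.2 ∈ ({2, 4, 6} : Set ℕ)
  | [], a, n, hchain, hD => by
    have ha : a ∈ ({1, 2, 4, 6} : Set ℕ) := (hD (a, n) (by simp)).1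
    have hn : n ∈ ({1, 2, 4, 6} : Set ℕ) := (hD (a, n) (by simp)).2
    by_cases hna : n = a
    · refine ⟨4, [], ?_, Or.inl hna, ?_⟩
      · rw [hna]; simp [rle]
      · intro p hp
        simp only [List.mem_singleton] at hp
        subst hp
        exact ⟨hn, by simp⟩
    · refine ⟨2, [(a, 2)], by simp [rle, hna], Or.inr rfl, ?_⟩
      intro p hp
      simp only [List.mem_cons, List.mem_singleton] at hp
      rcases hp with hp | hp | hp <;> first
        | (subst hp; exact ⟨hn, by simp⟩)
        | (subst hp; exact ⟨ha, by simp⟩)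
        | exact absurd hp (by simp)
  | (b, m) :: L', a, n, hchain, hD => by
    obtain ⟨hab, hchain'⟩ := List.isChain_cons_cons.mp hchain
    have ha : a ∈ ({1, 2, 4, 6} : Set ℕ) := (hD (a, n) (by simp)).1
    have hn : n ∈ ({1, 2, 4, 6} : Set ℕ) := (hD (a, n) (by simp)).2
    obtain ⟨q, r, hrle, hq, hmem⟩ := key L' b m hchain' (fun p hp => hD p (by simp [hp]))
    set X := (((b, m) :: L').flatMap fun p => [p.2, p.2, p.1, p.1]) with hX
    have hflat : (((a, n) :: (b, m) :: L').flatMap fun p : ℕ × ℕ => [p.2, p.2, p.1, p.1])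
        = n :: n :: a :: a :: X := by simp [hX]
    rw [hflat]
    by_cases ham : a = m
    · have hq2 : q = 2 := hq.resolve_left (fun h => hab (ham.trans h))
      have h1 : rle (a :: X) = (a, 3) :: r := by
        rw [rle_cons_eq a m q X r hrle, if_pos ham, hq2]
      have h2 : rle (a :: a :: X) = (a, 4) :: r := by
        rw [rle_cons_eq a a 3 _ r h1, if_pos rfl]
      by_cases hna : n = a
      · have h3 : rle (n :: a :: a :: X) = (n, 5) :: r := by
          rw [rle_cons_eq n a 4 _ r h2, if_pos hna]
        have h4 : rle (n :: n :: a :: a :: X) = (n, 6) :: r := by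
          rw [rle_cons_eq n n 5 _ r h3, if_pos rfl]
        refine ⟨6, r, h4, Or.inl hna, ?_⟩
        intro p hp
        rcases List.mem_cons.mp hp with hp | hp
        · subst hp; exact ⟨hn, by simp⟩
        · exact hmem p (by simp [hp])
      · have h3 : rle (n :: a :: a :: X) = (n, 1) :: (a, 4) :: r := by
          rw [rle_cons_eq n a 4 _ r h2, if_neg hna]
        have h4 : rle (n :: n :: a :: a :: X) = (n, 2) :: (a, 4) :: r := by
          rw [rle_cons_eq n n 1 _ _ h3, if_pos rfl]
        refine ⟨2, (a, 4) :: r, h4, Or.inr rfl, ?_⟩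
        intro p hp
        rcases List.mem_cons.mp hp with hp | hp
        · subst hp; exact ⟨hn, by simp⟩
        rcases List.mem_cons.mp hp with hp | hp
        · subst hp; exact ⟨ha, by simp⟩
        · exact hmem p (by simp [hp])
    · have h1 : rle (a :: X) = (a, 1) :: (m, q) :: r := by
        rw [rle_cons_eq a m q X r hrle, if_neg ham]
      have h2 : rle (a :: a :: X) = (a, 2) :: (m, q) :: r := by
        rw [rle_cons_eq a a 1 _ _ h1, if_pos rfl]
      by_cases hna : n = a
      · have h3 : rle (n :: a :: a :: X) = (n, 3) :: (m, q) :: r := by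
          rw [rle_cons_eq n a 2 _ _ h2, if_pos hna]
        have h4 : rle (n :: n :: a :: a :: X) = (n, 4) :: (m, q) :: r := by
          rw [rle_cons_eq n n 3 _ _ h3, if_pos rfl]
        refine ⟨4, (m, q) :: r, h4, Or.inl hna, ?_⟩
        intro p hp
        rcases List.mem_cons.mp hp with hp | hp
        · subst hp; exact ⟨hn, by simp⟩
        · exact hmem p hp
      · have h3 : rle (n :: a :: a :: X) = (n, 1) :: (a, 2) :: (m, q) :: r := by
          rw [rle_cons_eq n a 2 _ _ h2, if_neg hna]
        have h4 : rle (n :: n :: a :: a :: X) = (n, 2) :: (a, 2) :: (m, q) :: r := by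
          rw [rle_cons_eq n n 1 _ _ h3, if_pos rfl]
        refine ⟨2, (a, 2) :: (m, q) :: r, h4, Or.inr rfl, ?_⟩
        intro p hp
        rcases List.mem_cons.mp hp with hp | hp
        · subst hp; exact ⟨hn, by simp⟩
        rcases List.mem_cons.mp hp with hp | hp
        · subst hp; exact ⟨ha, by simp⟩
        · exact hmem p hp

lemma step (T : List ℕ) (hne : rle T ≠ [])
    (hD : ∀ p ∈ rle T, p.1 ∈ ({1, 2, 4, 6} : Set ℕ) ∧ p.2 ∈ ({1, 2, 4, 6} : Set ℕ)) :
    propP (lsa T) ∧ lsa T ≠ [] := by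
  obtain ⟨⟨a, n⟩, L, hL⟩ := List.exists_cons_of_ne_nil hne
  have hchain := rle_chain' T
  rw [hL] at hchain hD
  obtain ⟨q, r, hrle, -, hmem⟩ := key L a n hchain hD
  constructor
  · intro p hp
    rw [lsa, hL] at hp
    rw [hrle] at hp
    exact hmem p hp
  · rw [lsa, hL]
    simp

/-- For seeds in `{1,2,4,6}`, every term of the look-and-say-again sequence from
index 1 on satisfies property `P`. -/
theorem propP_lsa_seq (d : ℕ) (hd : d ∈ ({1, 2, 4, 6} : Set ℕ)) :
    ∀ n : ℕ, 1 ≤ n → propP (lsa^[n] [d]) := by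
  have hinv : ∀ m : ℕ, (lsa^[m] [d] ≠ []) ∧
      (∀ p ∈ rle (lsa^[m] [d]), p.1 ∈ ({1, 2, 4, 6} : Set ℕ) ∧
        p.2 ∈ ({1, 2, 4, 6} : Set ℕ)) ∧ (1 ≤ m → propP (lsa^[m] [d])) := by
    intro m
    induction m with
    | zero =>
      refine ⟨by simp, ?_, by omega⟩
      intro p hp
      simp [rle] at hp
      subst hp
      exact ⟨hd, by simp⟩
    | succ k ih =>
      obtain ⟨hne, hD, -⟩ := ih
      have hrne : rle (lsa^[k] [d]) ≠ [] := by
        obtain ⟨x, t, hxt⟩ := List.exists_cons_of_ne_nil hne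
        rw [hxt]; exact rle_cons_ne x t
      obtain ⟨hP, hne'⟩ := step _ hrne hD
      rw [Function.iterate_succ_apply']
      refine ⟨hne', ?_, fun _ => hP⟩
      intro p hp
      obtain ⟨h1, h2⟩ := hP p hp
      refine ⟨h1, ?_⟩
      rcases h2 with h | h | h <;> simp [h]
  intro n hn
  exact (hinv n).2.2 hn
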